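/- Let P be a set of n points in ℝ^d (d ≥ 2) in general position with n ≥ d + 3, and let C be the center of P (assumed nonempty). If C does not have dimension d, then C consists of exactly one point, that point belongs to P, and n = k(d+1) + 1 for some integer k ≥ 2. -/

import Mathlib

/-- A centerpoint of a finite set `P` of points in `ℝ^d`: every closed halfspace
containing `c` contains at least `⌈|P|/(d+1)⌉` points of `P`. -/
def IsCenterpoint {d : ℕ} (P : Finset (EuclideanSpace ℝ (Fin d)))
    (c : EuclideanSpace ℝ (Fin d)) : Prop :=
  ∀ (f : EuclideanSpace ℝ (Fin d) →ₗ[ℝ] ℝ) (a : ℝ), f ≠ 0 → a ≤ f c →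
    ⌈(P.card : ℚ) / (d + 1)⌉₊ ≤ (P.filter fun q => a ≤ f q).card

/-- The dimension of a subset of `ℝ^d`: the rank of the direction of its affine span. -/
noncomputable def setDim {d : ℕ} (S : Set (EuclideanSpace ℝ (Fin d))) : ℕ :=
  Module.finrank ℝ (affineSpan ℝ S).direction

/-- General position in `ℝ^d`: for every `k ∈ {1, …, d-1}`, no `k + 2` points of `P`
lie in a `k`-dimensional affine subspace. -/
def InGeneralPosition {d : ℕ} (P : Finset (EuclideanSpace ℝ (Fin d))) : Prop :=
  ∀ k : ℕ, 1 ≤ k → k ≤ d - 1 →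
    ∀ A : AffineSubspace ℝ (EuclideanSpace ℝ (Fin d)),
      Module.finrank ℝ A.direction = k →
      ((P : Set (EuclideanSpace ℝ (Fin d))) ∩ (A : Set (EuclideanSpace ℝ (Fin d)))).ncard < k + 2


open Finset Module
open scoped RealInnerProductSpace

noncomputable def rthSup {d : ℕ} (P : Finset (EuclideanSpace ℝ (Fin d))) (r : ℕ) (hr : 0 < r)
    (hrn : r ≤ P.card) (u : EuclideanSpace ℝ (Fin d)) : ℝ :=
  (P.powersetCard r).attach.sup'
    (Finset.attach_nonempty_iff.mpr (Finset.powersetCard_nonempty.mpr hrn))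
    fun S => S.1.inf'
      (Finset.card_pos.mp (by have h2 := (Finset.mem_powersetCard.mp S.2).2; omega))
      fun q => ⟪u, q⟫

lemma le_rthSup_iff {d : ℕ} (P : Finset (EuclideanSpace ℝ (Fin d))) (r : ℕ) (hr : 0 < r)
    (hrn : r ≤ P.card) (u : EuclideanSpace ℝ (Fin d)) (a : ℝ) :
    a ≤ rthSup P r hr hrn u ↔ r ≤ (P.filter fun q => a ≤ ⟪u, q⟫).card := by
  constructor
  · intro ha
    obtain ⟨S, hSmem, hEq⟩ := Finset.exists_mem_eq_sup' (Finset.attach_nonempty_iff.mpr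
      (Finset.powersetCard_nonempty.mpr hrn)) (fun (S : {x // x ∈ P.powersetCard r}) => S.1.inf'
      (Finset.card_pos.mp (by have h2 := (Finset.mem_powersetCard.mp S.2).2; omega))
      fun q => ⟪u, q⟫)
    rw [rthSup, hEq] at ha
    have hsub : S.1 ⊆ P.filter fun q => a ≤ ⟪u, q⟫ := by
      intro q hq
      rw [Finset.mem_filter]
      exact ⟨(Finset.mem_powersetCard.mp S.2).1 hq, le_trans ha (Finset.inf'_le _ hq)⟩
    calc r = S.1.card := ((Finset.mem_powersetCard.mp S.2).2).symm
      _ ≤ _ := Finset.card_le_card hsub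
  · intro hcard
    obtain ⟨S, hsub, hcardS⟩ := Finset.exists_subset_card_eq hcard
    have hSP : S ∈ P.powersetCard r :=
      Finset.mem_powersetCard.mpr ⟨hsub.trans (Finset.filter_subset _ _), hcardS⟩
    rw [rthSup]
    refine le_trans ?_ (Finset.le_sup' _ (Finset.mem_attach _ ⟨S, hSP⟩))
    apply Finset.le_inf'
    intro q hq
    exact (Finset.mem_filter.mp (hsub hq)).2

lemma rthSup_smul {d : ℕ} (P : Finset (EuclideanSpace ℝ (Fin d))) (r : ℕ) (hr : 0 < r)
    (hrn : r ≤ P.card) (u : EuclideanSpace ℝ (Fin d)) {s : ℝ} (hs : 0 < s) :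
    rthSup P r hr hrn (s • u) = s * rthSup P r hr hrn u := by
  apply le_antisymm
  · rw [← div_le_iff₀' hs]
    rw [le_rthSup_iff]
    have h1 : r ≤ (P.filter fun q => rthSup P r hr hrn (s • u) ≤ ⟪s • u, q⟫).card :=
      (le_rthSup_iff P r hr hrn (s • u) _).mp le_rfl
    refine le_trans h1 (Finset.card_le_card ?_)
    intro q hq
    rw [Finset.mem_filter] at hq ⊢
    refine ⟨hq.1, ?_⟩
    have := hq.2
    rw [real_inner_smul_left] at this
    rw [div_le_iff₀' hs]
    exact this
  · rw [le_rthSup_iff]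
    have h1 : r ≤ (P.filter fun q => rthSup P r hr hrn u ≤ ⟪u, q⟫).card :=
      (le_rthSup_iff P r hr hrn u _).mp le_rfl
    refine le_trans h1 (Finset.card_le_card ?_)
    intro q hq
    rw [Finset.mem_filter] at hq ⊢
    refine ⟨hq.1, ?_⟩
    rw [real_inner_smul_left]
    exact mul_le_mul_of_nonneg_left hq.2 hs.le

lemma continuous_rthSup {d : ℕ} (P : Finset (EuclideanSpace ℝ (Fin d))) (r : ℕ) (hr : 0 < r)
    (hrn : r ≤ P.card) : Continuous (rthSup P r hr hrn) := by
  unfold rthSup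
  apply Continuous.finset_sup'_apply
  intro S _
  apply Continuous.finset_inf'_apply
  intro q _
  exact continuous_id.inner continuous_const

lemma isCenterpoint_iff_rthSup {d : ℕ} (P : Finset (EuclideanSpace ℝ (Fin d))) (r : ℕ)
    (hr : 0 < r) (hrn : r ≤ P.card) (hrdef : r = ⌈(P.card : ℚ) / (d + 1)⌉₊)
    (c : EuclideanSpace ℝ (Fin d)) :
    IsCenterpoint P c ↔ ∀ u : EuclideanSpace ℝ (Fin d), u ≠ 0 → ⟪u, c⟫ ≤ rthSup P r hr hrn u := by
  constructor
  · intro h u hu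
    rw [le_rthSup_iff]
    have hf : ((innerSL ℝ u).toLinearMap : EuclideanSpace ℝ (Fin d) →ₗ[ℝ] ℝ) ≠ 0 := by
      intro h0
      have h1 : ((innerSL ℝ u).toLinearMap) u = 0 := by rw [h0]; rfl
      have h2 : ⟪u, u⟫ = 0 := h1
      exact hu (inner_self_eq_zero.mp h2)
    have := h (innerSL ℝ u).toLinearMap ⟪u, c⟫ hf le_rfl
    rw [← hrdef] at this
    exact this
  · intro h f a hf ha
    set F : EuclideanSpace ℝ (Fin d) →L[ℝ] ℝ := LinearMap.toContinuousLinearMap f with hF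
    set v := (InnerProductSpace.toDual ℝ (EuclideanSpace ℝ (Fin d))).symm F with hv
    have hvapp : ∀ x, ⟪v, x⟫ = f x := fun x => InnerProductSpace.toDual_symm_apply
    have hvne : v ≠ 0 := by
      intro h0
      apply hf
      ext x
      have := hvapp x
      rw [h0, inner_zero_left] at this
      exact this.symm
    have h1 : ⟪v, c⟫ ≤ rthSup P r hr hrn v := h v hvne
    have h2 : r ≤ (P.filter fun q => ⟪v, c⟫ ≤ ⟪v, q⟫).card := (le_rthSup_iff _ _ _ _ _ _).mp h1
    rw [← hrdef]
    refine le_trans h2 (Finset.card_le_card ?_)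
    intro q hq
    rw [Finset.mem_filter] at hq ⊢
    refine ⟨hq.1, ?_⟩
    have h3 := hq.2
    rw [hvapp, hvapp] at h3
    linarith

lemma cap_card_le {d : ℕ} (P : Finset (EuclideanSpace ℝ (Fin d))) (r : ℕ) (hr : 0 < r)
    (hrn : r ≤ P.card) (c u : EuclideanSpace ℝ (Fin d))
    (hu : rthSup P r hr hrn u ≤ ⟪u, c⟫) :
    (P.filter fun q => 0 < ⟪u, q - c⟫).card ≤ r - 1 := by
  by_contra hcon
  have hge : r ≤ (P.filter fun q => 0 < ⟪u, q - c⟫).card := by omega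
  obtain ⟨S, hsub, hcardS⟩ := Finset.exists_subset_card_eq hge
  have hSne : S.Nonempty := Finset.card_pos.mp (by omega)
  set ε := S.inf' hSne fun q => ⟪u, q - c⟫ with hε
  have hεpos : 0 < ε := by
    rw [hε, Finset.lt_inf'_iff]
    intro q hq
    exact (Finset.mem_filter.mp (hsub hq)).2
  have h1 : ⟪u, c⟫ + ε ≤ rthSup P r hr hrn u := by
    rw [le_rthSup_iff]
    refine le_trans hcardS.ge (Finset.card_le_card ?_)
    intro q hq
    rw [Finset.mem_filter]
    refine ⟨(Finset.mem_filter.mp (hsub hq)).1, ?_⟩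
    have h2 : ε ≤ ⟪u, q - c⟫ := Finset.inf'_le _ hq
    have h3 : ⟪u, q - c⟫ = ⟪u, q⟫ - ⟪u, c⟫ := inner_sub_right u q c
    linarith
  linarith

lemma mem_orthogonal_span {d : ℕ} {ι : Type*} (z : ι → EuclideanSpace ℝ (Fin d))
    (y : EuclideanSpace ℝ (Fin d)) (h : ∀ i, ⟪z i, y⟫ = 0) :
    y ∈ (Submodule.span ℝ (Set.range z))ᗮ := by
  rw [Submodule.mem_orthogonal]
  intro x hx
  induction hx using Submodule.span_induction with
  | mem x hxx => obtain ⟨i, rfl⟩ := hxx; exact h i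
  | zero => exact inner_zero_left y
  | add a b _ _ ha hb => rw [inner_add_left, ha, hb, add_zero]
  | smul t a _ ha => rw [real_inner_smul_left, ha, mul_zero]

lemma isCompact_convexHullE {d : ℕ} {U : Set (EuclideanSpace ℝ (Fin d))} (hU : IsCompact U) :
    IsCompact (convexHull ℝ U) := by
  classical
  rcases U.eq_empty_or_nonempty with rfl | ⟨u₀, hu₀⟩
  · simp
  set F : (Fin (d+1) → ℝ) × (Fin (d+1) → EuclideanSpace ℝ (Fin d)) → EuclideanSpace ℝ (Fin d) :=
    fun p => ∑ i, p.1 i • p.2 i with hF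
  have hFcont : Continuous F := by
    apply continuous_finset_sum
    intro i _
    exact ((continuous_apply i).comp continuous_fst).smul
      ((continuous_apply i).comp continuous_snd)
  have hS : IsCompact ((stdSimplex ℝ (Fin (d+1))) ×ˢ (Set.univ.pi fun _ : Fin (d+1) => U)) :=
    IsCompact.prod (isCompact_stdSimplex (𝕜 := ℝ) (ι := Fin (d+1))) (isCompact_univ_pi fun _ => hU)
  have himg : convexHull ℝ U =
      F '' ((stdSimplex ℝ (Fin (d+1))) ×ˢ (Set.univ.pi fun _ : Fin (d+1) => U)) := by
    apply Set.Subset.antisymm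
    · intro x hx
      obtain ⟨ι, hfin, z, w, hrange, hai, hwpos, hw1, hsum⟩ :=
        eq_pos_convex_span_of_mem_convexHull hx
      letI := hfin
      have hcard : Fintype.card ι ≤ d + 1 := by
        have h1 := hai.card_le_finrank_succ
        have h2 := Submodule.finrank_le (vectorSpan ℝ (Set.range z))
        rw [finrank_euclideanSpace_fin] at h2
        omega
      obtain ⟨e⟩ : Nonempty (ι ↪ Fin (d+1)) :=
        Function.Embedding.nonempty_of_card_le (by simpa using hcard)
      have hzi : ∀ i : ι, (if h : ∃ i', e i' = e i then z h.choose else u₀) = z i := by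
        intro i
        have hex : ∃ i', e i' = e i := ⟨i, rfl⟩
        simp only [dif_pos hex]
        exact congrArg z (e.injective hex.choose_spec)
      refine ⟨⟨fun j => ∑ i, if e i = j then w i else 0,
              fun j => if h : ∃ i', e i' = j then z h.choose else u₀⟩, ⟨?_, ?_⟩, ?_⟩
      · refine ⟨fun j => Finset.sum_nonneg fun i _ => ?_, ?_⟩
        · by_cases h : e i = j <;> simp [h, (hwpos i).le]
        · rw [Finset.sum_comm]
          simp only [Finset.sum_ite_eq, Finset.mem_univ, if_true]
          exact hw1
      · intro j _
        dsimp only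
        split_ifs with h
        · exact hrange ⟨h.choose, rfl⟩
        · exact hu₀
      · show ∑ j, (∑ i, if e i = j then w i else 0) • _ = x
        have step1 : ∀ j : Fin (d+1), (∑ i, if e i = j then w i else 0) •
            (fun j => if h : ∃ i', e i' = j then z h.choose else u₀) j
            = ∑ i, if e i = j then w i • (fun j => if h : ∃ i', e i' = j then z h.choose else u₀) j else 0 := by
          intro j
          rw [Finset.sum_smul]
          congr 1
          ext i
          by_cases h : e i = j <;> simp [h]
        rw [Finset.sum_congr rfl fun j _ => step1 j, Finset.sum_comm]
        simp only [Finset.sum_ite_eq, Finset.mem_univ, if_true]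
        rw [← hsum]
        exact Finset.sum_congr rfl fun i _ => by rw [hzi i]
    · rintro x ⟨⟨w, zz⟩, ⟨hw, hz⟩, rfl⟩
      obtain ⟨hw1, hw2⟩ := hw
      have hz' : ∀ i, zz i ∈ U := fun i => hz i (Set.mem_univ i)
      have hcm := Finset.centerMass_mem_convexHull (Finset.univ) (fun i _ => hw1 i)
        (by rw [hw2]; norm_num) (fun i _ => hz' i)
      rwa [Finset.centerMass_eq_of_sum_1 _ _ hw2] at hcm
  rw [himg]
  exact hS.image hFcont

set_option maxHeartbeats 1600000 in
/-- for `n ≥ d + 3` points in general position in `ℝ^d` (`d ≥ 2`) with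
nonempty center `C`, if `C` is not `d`-dimensional then `C` is a single point of `P`
and `n = k(d+1) + 1` for some `k ≥ 2`. -/
theorem center_not_full_dim_of_general_position
    (d : ℕ) (hd : 2 ≤ d) (P : Finset (EuclideanSpace ℝ (Fin d))) (n : ℕ) (hn : P.card = n)
    (hn3 : d + 3 ≤ n) (hgp : InGeneralPosition P)
    (C : Set (EuclideanSpace ℝ (Fin d))) (hC : C = {c | IsCenterpoint P c})
    (hCne : C.Nonempty) (hdim : setDim C ≠ d) :
    (∃ p ∈ P, C = {p}) ∧ ∃ k : ℕ, 2 ≤ k ∧ n = k * (d + 1) + 1 := by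
  classical
  subst hC
  subst hn
  set r : ℕ := ⌈(P.card : ℚ) / (d + 1)⌉₊ with hrdef
  have hd1 : (0:ℚ) < (d:ℚ) + 1 := by positivity
  have hnpos : 0 < P.card := by omega
  have hr : 0 < r := by
    rw [hrdef, Nat.lt_ceil]
    push_cast
    positivity
  have hrn : r ≤ P.card := by
    rw [hrdef]
    exact Nat.ceil_le.mpr (div_le_self (by positivity) (by linarith))
  have hlow : (d+1) * (r-1) + 1 ≤ P.card := by
    have h1 : ((r-1 : ℕ) : ℚ) < (P.card : ℚ)/((d:ℚ)+1) := Nat.lt_ceil.mp (by omega)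
    have h2 : ((r-1:ℕ):ℚ) * ((d:ℚ)+1) < P.card := (lt_div_iff₀ hd1).mp h1
    have h3 : (r-1) * (d+1) < P.card := by exact_mod_cast h2
    rw [Nat.mul_comm]
    omega
  set g := rthSup P r hr hrn with hg
  have hcenter : ∀ c, IsCenterpoint P c ↔
      ∀ u : EuclideanSpace ℝ (Fin d), u ≠ 0 → ⟪u, c⟫ ≤ g u :=
    fun c => isCenterpoint_iff_rthSup P r hr hrn hrdef c
  have hgcont : Continuous g := continuous_rthSup P r hr hrn
  -- Step B : the tight directions positively span
  have stepB : ∀ c, IsCenterpoint P c →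
      (0 : EuclideanSpace ℝ (Fin d)) ∈ convexHull ℝ {u | ‖u‖ = 1 ∧ g u ≤ ⟪u, c⟫} := by
    intro c hc
    by_contra h0
    have hC1 : ∀ u : EuclideanSpace ℝ (Fin d), u ≠ 0 → ⟪u, c⟫ ≤ g u := (hcenter c).mp hc
    set U : Set (EuclideanSpace ℝ (Fin d)) := {u | ‖u‖ = 1 ∧ g u ≤ ⟪u, c⟫} with hU
    have hUclosed : IsClosed U := by
      rw [hU, Set.setOf_and]
      exact (isClosed_eq continuous_norm continuous_const).inter
        (isClosed_le hgcont (continuous_id.inner continuous_const))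
    have hUsub : U ⊆ Metric.sphere 0 1 := fun u hu => by
      simpa [mem_sphere_zero_iff_norm] using hu.1
    have hUcomp : IsCompact U := (isCompact_sphere 0 1).of_isClosed_subset hUclosed hUsub
    obtain ⟨v₀, hv₀, δ, hδ, hδ1, hsep⟩ :
        ∃ v₀ : EuclideanSpace ℝ (Fin d), ‖v₀‖ = 1 ∧ ∃ δ : ℝ, 0 < δ ∧ δ ≤ 1 ∧
          ∀ u ∈ U, ⟪u, v₀⟫ ≤ -(2*δ) := by
      rcases Set.eq_empty_or_nonempty U with hUe | hUne
      · refine ⟨(EuclideanSpace.basisFun (Fin d) ℝ) ⟨0, by omega⟩, ?_, 1/2, by norm_num,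
          by norm_num, by simp [hUe]⟩
        have := (EuclideanSpace.basisFun (Fin d) ℝ).orthonormal.1 ⟨0, by omega⟩
        simpa using this
      · have hK : IsCompact (convexHull ℝ U) := isCompact_convexHullE hUcomp
        obtain ⟨f, s, hfs, hs0⟩ := geometric_hahn_banach_closed_point
          (convex_convexHull ℝ U) hK.isClosed h0
        have hs' : s < 0 := by simpa using hs0
        set v := (InnerProductSpace.toDual ℝ (EuclideanSpace ℝ (Fin d))).symm f with hv
        have hvapp : ∀ x, ⟪v, x⟫ = f x := fun x => InnerProductSpace.toDual_symm_apply
        obtain ⟨u₁, hu₁⟩ := hUne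
        have hfu₁ : f u₁ < s := hfs u₁ (subset_convexHull ℝ U hu₁)
        have hvne : v ≠ 0 := by
          intro h
          have h2 := hvapp u₁
          rw [h, inner_zero_left] at h2
          linarith
        have hnv : 0 < ‖v‖ := norm_pos_iff.mpr hvne
        refine ⟨‖v‖⁻¹ • v, ?_, min ((-s)/(2*‖v‖)) 1, lt_min (div_pos (by linarith) (by positivity)) one_pos,
          min_le_right _ _, ?_⟩
        · rw [norm_smul, norm_inv, norm_norm, inv_mul_cancel₀ (ne_of_gt hnv)]
        · intro u hu
          have h1 : ⟪u, v⟫ < s := by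
            rw [real_inner_comm, hvapp]
            exact hfs u (subset_convexHull ℝ U hu)
          have h2 : ⟪u, ‖v‖⁻¹ • v⟫ = ‖v‖⁻¹ * ⟪u, v⟫ := real_inner_smul_right u v _
          have h3 : ‖v‖⁻¹ * ⟪u, v⟫ ≤ ‖v‖⁻¹ * s :=
            mul_le_mul_of_nonneg_left h1.le (by positivity)
          have h4 : -(2 * min ((-s)/(2*‖v‖)) 1) ≥ -(2 * ((-s)/(2*‖v‖))) := by
            have := min_le_left ((-s)/(2*‖v‖)) 1
            linarith
          have h5 : -(2 * ((-s)/(2*‖v‖))) = ‖v‖⁻¹ * s := by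
            field_simp
          rw [h2]
          linarith
    set A : Set (EuclideanSpace ℝ (Fin d)) := {u | ‖u‖ = 1 ∧ -δ ≤ ⟪u, v₀⟫} with hA
    have hAclosed : IsClosed A := by
      rw [hA, Set.setOf_and]
      exact (isClosed_eq continuous_norm continuous_const).inter
        (isClosed_le continuous_const (continuous_id.inner continuous_const))
    have hAcomp : IsCompact A := (isCompact_sphere 0 1).of_isClosed_subset hAclosed
      (fun u hu => by simpa [mem_sphere_zero_iff_norm] using hu.1)
    have hAne : A.Nonempty := by
      refine ⟨v₀, hv₀, ?_⟩
      rw [real_inner_self_eq_norm_sq, hv₀]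
      nlinarith
    obtain ⟨u₁, hu₁A, hu₁min⟩ := hAcomp.exists_isMinOn hAne
      (show ContinuousOn (fun u : EuclideanSpace ℝ (Fin d) => g u - ⟪u, c⟫) A from
        (hgcont.sub (continuous_id.inner continuous_const)).continuousOn)
    set η := g u₁ - ⟪u₁, c⟫ with hη
    have hηpos : 0 < η := by
      rcases lt_or_ge 0 (g u₁ - ⟪u₁, c⟫) with h | h
      · exact h
      · exfalso
        have hu₁U : u₁ ∈ U := ⟨hu₁A.1, by linarith⟩
        have := hsep u₁ hu₁U
        have := hu₁A.2
        linarith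
    set t := η/2 with ht
    have htpos : 0 < t := by positivity
    have hmem : ∀ w ∈ Metric.closedBall v₀ δ, IsCenterpoint P (c + t • w) := by
      intro w hw
      have hwv₀ : ‖w - v₀‖ ≤ δ := by
        rw [Metric.mem_closedBall, dist_eq_norm] at hw
        exact hw
      have hwn : ‖w‖ ≤ 2 := by
        calc ‖w‖ = ‖v₀ + (w - v₀)‖ := by congr 1; abel
          _ ≤ ‖v₀‖ + ‖w - v₀‖ := norm_add_le _ _
          _ ≤ 1 + δ := by rw [hv₀]; linarith
          _ ≤ 2 := by linarith
      apply (hcenter _).mpr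
      have hunit : ∀ u : EuclideanSpace ℝ (Fin d), ‖u‖ = 1 → ⟪u, c + t • w⟫ ≤ g u := by
        intro u hu1
        have hinner : ⟪u, c + t • w⟫ = ⟪u, c⟫ + t * ⟪u, w⟫ := by
          rw [inner_add_right, real_inner_smul_right]
        by_cases hcase : -δ ≤ ⟪u, v₀⟫
        · have huA : u ∈ A := ⟨hu1, hcase⟩
          have h2 : η ≤ g u - ⟪u, c⟫ := isMinOn_iff.mp hu₁min u huA
          have h3 : ⟪u, w⟫ ≤ 2 := by
            calc ⟪u, w⟫ ≤ ‖u‖ * ‖w‖ := real_inner_le_norm u w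
              _ ≤ 2 := by rw [hu1]; linarith
          have h4 : t * ⟪u, w⟫ ≤ t * 2 := mul_le_mul_of_nonneg_left h3 htpos.le
          rw [hinner]
          have : t * 2 = η := by rw [ht]; ring
          linarith
        · push_neg at hcase
          have h5 : ⟪u, w - v₀⟫ ≤ δ := by
            calc ⟪u, w - v₀⟫ ≤ ‖u‖ * ‖w - v₀‖ := real_inner_le_norm _ _
              _ ≤ δ := by rw [hu1]; linarith
          have h6 : ⟪u, w⟫ = ⟪u, v₀⟫ + ⟪u, w - v₀⟫ := by
            rw [← inner_add_right]
            congr 1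
            abel
          have h7 : ⟪u, w⟫ < 0 := by rw [h6]; linarith
          have h8 : ⟪u, c⟫ ≤ g u := hC1 u (by intro h; rw [h] at hu1; simp at hu1)
          rw [hinner]
          nlinarith
      intro u hu
      have hnu : 0 < ‖u‖ := norm_pos_iff.mpr hu
      set u' := ‖u‖⁻¹ • u with hu'
      have hu'1 : ‖u'‖ = 1 := by
        rw [hu', norm_smul, norm_inv, norm_norm, inv_mul_cancel₀ (ne_of_gt hnu)]
      have hid : (‖u‖ : ℝ) • u' = u := smul_inv_smul₀ (ne_of_gt hnu) u
      have h1 : ⟪u, c + t • w⟫ = ‖u‖ * ⟪u', c + t • w⟫ := by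
        rw [← hid, real_inner_smul_left]
        rw [hid]
      have h2 : g u = ‖u‖ * g u' := by
        conv_lhs => rw [← hid]
        rw [hg, rthSup_smul P r hr hrn u' hnu]
      rw [h1, h2]
      exact mul_le_mul_of_nonneg_left (hunit u' hu'1) hnu.le
    -- the center contains a ball, so it is full-dimensional
    exfalso
    apply hdim
    have hdir : (affineSpan ℝ {c' | IsCenterpoint P c'}).direction = ⊤ := by
      refine le_antisymm le_top ?_
      rw [← (EuclideanSpace.basisFun (Fin d) ℝ).toBasis.span_eq]
      refine Submodule.span_le.mpr ?_
      rintro x ⟨i, rfl⟩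
      have hb1 : ‖(EuclideanSpace.basisFun (Fin d) ℝ).toBasis i‖ = 1 := by
        rw [OrthonormalBasis.coe_toBasis]
        exact (EuclideanSpace.basisFun (Fin d) ℝ).orthonormal.1 i
      set b := (EuclideanSpace.basisFun (Fin d) ℝ).toBasis i with hb
      have hm1 : c + t • v₀ ∈ {c' | IsCenterpoint P c'} :=
        hmem v₀ (Metric.mem_closedBall_self hδ.le)
      have hm2 : c + t • (v₀ + δ • b) ∈ {c' | IsCenterpoint P c'} := by
        apply hmem
        rw [Metric.mem_closedBall, dist_eq_norm]
        have : v₀ + δ • b - v₀ = δ • b := by abel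
        rw [this, norm_smul, hb1]
        simp [abs_of_pos hδ]
      have h3 := AffineSubspace.vsub_mem_direction
        (mem_affineSpan ℝ hm2) (mem_affineSpan ℝ hm1)
      have h4 : (c + t • (v₀ + δ • b)) -ᵥ (c + t • v₀) = (t*δ) • b := by
        rw [vsub_eq_sub, smul_add, smul_smul]
        abel
      rw [h4] at h3
      have h5 : b = (t*δ)⁻¹ • ((t*δ) • b) := by
        rw [smul_smul, inv_mul_cancel₀ (by positivity), one_smul]
      rw [h5]
      exact Submodule.smul_mem _ _ h3
    rw [setDim, hdir, finrank_top, finrank_euclideanSpace_fin]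
  -- Step Key : every centerpoint is a point of P, the cardinality is determined,
  -- and there is a covering family of directions
  have stepKey : ∀ c, IsCenterpoint P c →
      c ∈ P ∧ P.card = (d+1)*(r-1)+1 ∧
      ∃ (ι : Type) (_ : Fintype ι) (z : ι → EuclideanSpace ℝ (Fin d)),
        (∀ i, z i ≠ 0 ∧ (P.filter fun q => 0 < ⟪z i, q - c⟫).card ≤ r - 1) ∧
        (∀ q ∈ P, q ≠ c → ∃ i, 0 < ⟪z i, q - c⟫) := by
    intro c hc
    obtain ⟨ι, hfin, z, w, hrange, hai, hwpos, hw1, hsum⟩ :=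
      eq_pos_convex_span_of_mem_convexHull (stepB c hc)
    letI := hfin
    have hzU : ∀ i, ‖z i‖ = 1 ∧ g (z i) ≤ ⟪z i, c⟫ := fun i => hrange (Set.mem_range_self i)
    have hzne : ∀ i, z i ≠ 0 := by
      intro i h
      have := (hzU i).1
      rw [h] at this
      simp at this
    have hcap : ∀ i, (P.filter fun q => 0 < ⟪z i, q - c⟫).card ≤ r - 1 :=
      fun i => cap_card_le P r hr hrn c (z i) (hzU i).2
    have hne : Nonempty ι := by
      rcases isEmpty_or_nonempty ι with h | h
      · exfalso
        rw [Finset.univ_eq_empty, Finset.sum_empty] at hw1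
        norm_num at hw1
      · exact h
    set m := Fintype.card ι with hm
    have h0aff : (0 : EuclideanSpace ℝ (Fin d)) ∈ affineSpan ℝ (Set.range z) := by
      apply convexHull_subset_affineSpan
      have hcm := Finset.centerMass_mem_convexHull (Finset.univ) (fun i _ => (hwpos i).le)
        (by rw [hw1]; norm_num) (fun i _ => Set.mem_range_self (f := z) i)
      rwa [Finset.centerMass_eq_of_sum_1 _ _ hw1, hsum] at hcm
    have hspan : Submodule.span ℝ (Set.range z) = vectorSpan ℝ (Set.range z) := by
      apply le_antisymm
      · rw [Submodule.span_le]
        rintro x ⟨i, rfl⟩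
        have h1 := AffineSubspace.vsub_mem_direction
          (mem_affineSpan ℝ (Set.mem_range_self (f := z) i)) h0aff
        rwa [direction_affineSpan, vsub_eq_sub, sub_zero] at h1
      · rw [vectorSpan_def, Submodule.span_le]
        intro x hx
        rw [Set.mem_vsub] at hx
        obtain ⟨a, ha, b, hb, rfl⟩ := hx
        exact Submodule.sub_mem _ (Submodule.subset_span ha) (Submodule.subset_span hb)
    have hWrank : finrank ℝ (Submodule.span ℝ (Set.range z)) + 1 = m := by
      rw [hspan]
      exact hai.finrank_vectorSpan_add_one
    have hmle : m ≤ d + 1 := by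
      have h1 := Submodule.finrank_le (Submodule.span ℝ (Set.range z))
      rw [finrank_euclideanSpace_fin] at h1
      omega
    have hm2 : 2 ≤ m := by
      by_contra hmc
      have hm1 : m = 1 := by
        have := Fintype.card_pos (α := ι)
        omega
      have hz0 : finrank ℝ (Submodule.span ℝ (Set.range z)) = 0 := by omega
      have hbot := Submodule.finrank_eq_zero.mp hz0
      obtain ⟨i⟩ := hne
      apply hzne i
      have h2 := Submodule.subset_span (R := ℝ) (Set.mem_range_self (f := z) i)
      rw [hbot] at h2
      simpa using h2
    set covered := P.filter (fun q => ∃ i, 0 < ⟪z i, q - c⟫) with hcov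
    set rest := P.filter (fun q => ¬ ∃ i, 0 < ⟪z i, q - c⟫) with hrest
    have hpart : covered.card + rest.card = P.card :=
      Finset.card_filter_add_card_filter_not _
    have hcovcard : covered.card ≤ m * (r-1) := by
      have hsub : covered ⊆ Finset.univ.biUnion
          (fun i : ι => P.filter fun q => 0 < ⟪z i, q - c⟫) := by
        intro q hq
        rw [hcov, Finset.mem_filter] at hq
        obtain ⟨hqP, i, hi⟩ := hq
        exact Finset.mem_biUnion.mpr ⟨i, Finset.mem_univ i, Finset.mem_filter.mpr ⟨hqP, hi⟩⟩
      calc covered.card ≤ _ := Finset.card_le_card hsub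
        _ ≤ ∑ i : ι, (P.filter fun q => 0 < ⟪z i, q - c⟫).card := Finset.card_biUnion_le
        _ ≤ ∑ _i : ι, (r-1) := Finset.sum_le_sum (fun i _ => hcap i)
        _ = m * (r-1) := by rw [Finset.sum_const, Finset.card_univ, smul_eq_mul]
    have hrestperp : ∀ q ∈ rest, ∀ i, ⟪z i, q - c⟫ = 0 := by
      intro q hq
      rw [hrest, Finset.mem_filter] at hq
      obtain ⟨hqP, hq2⟩ := hq
      push_neg at hq2
      have hsumzero : ∑ i, w i * ⟪z i, q - c⟫ = 0 := by
        have h1 : ∀ i : ι, w i * ⟪z i, q - c⟫ = ⟪w i • z i, q - c⟫ :=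
          fun i => (real_inner_smul_left (z i) (q - c) (w i)).symm
        rw [Finset.sum_congr rfl fun i _ => h1 i, ← sum_inner, hsum, inner_zero_left]
      intro i
      have hterm : ∀ j ∈ Finset.univ, w j * ⟪z j, q - c⟫ ≤ 0 :=
        fun j _ => mul_nonpos_of_nonneg_of_nonpos (hwpos j).le (hq2 j)
      have h2 := (Finset.sum_eq_zero_iff_of_nonpos hterm).mp hsumzero i (Finset.mem_univ i)
      rcases mul_eq_zero.mp h2 with h3 | h3
      · exact absurd h3 (ne_of_gt (hwpos i))
      · exact h3
    rcases eq_or_lt_of_le hmle with hmeq | hmlt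
    · -- m = d + 1 : full positive spanning
      rw [hmeq] at hcovcard
      have hspan_top : Submodule.span ℝ (Set.range z) = ⊤ :=
        Submodule.eq_top_of_finrank_eq (by rw [finrank_euclideanSpace_fin]; omega)
      have hrestsub : ∀ q ∈ rest, q = c := by
        intro q hq
        have hperp := mem_orthogonal_span z (q - c) (hrestperp q hq)
        rw [hspan_top, Submodule.top_orthogonal_eq_bot, Submodule.mem_bot] at hperp
        exact sub_eq_zero.mp hperp
      have hrestcard : rest.card ≤ 1 := by
        have : rest ⊆ {c} := fun q hq => Finset.mem_singleton.mpr (hrestsub q hq)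
        calc rest.card ≤ ({c} : Finset _).card := Finset.card_le_card this
          _ = 1 := Finset.card_singleton c
      have hcard1 : P.card = (d+1)*(r-1)+1 ∧ rest.card = 1 := by
        constructor <;> omega
      have hrestc : rest = {c} := by
        apply Finset.eq_of_subset_of_card_le
          (fun q hq => Finset.mem_singleton.mpr (hrestsub q hq))
        rw [hcard1.2, Finset.card_singleton]
      have hcP : c ∈ P := by
        have : c ∈ rest := by rw [hrestc]; exact Finset.mem_singleton_self c
        exact Finset.filter_subset _ _ this
      refine ⟨hcP, hcard1.1, ι, hfin, z, fun i => ⟨hzne i, hcap i⟩, ?_⟩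
      intro q hqP hqc
      by_contra hno
      have : q ∈ rest := by
        rw [hrest, Finset.mem_filter]
        exact ⟨hqP, hno⟩
      rw [hrestc, Finset.mem_singleton] at this
      exact hqc this
    · -- m ≤ d : contradiction with general position
      exfalso
      have hmd : m ≤ d := by omega
      set W := Submodule.span ℝ (Set.range z) with hW
      have hfrank : finrank ℝ (Wᗮ) + (m-1) = d := by
        have h1 := Submodule.finrank_add_finrank_orthogonal W
        rw [finrank_euclideanSpace_fin] at h1
        omega
      set k := finrank ℝ (Wᗮ) with hk
      have hk1 : 1 ≤ k := by omega
      have hk2 : k ≤ d - 1 := by omega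
      have hgpA := hgp k hk1 hk2 (AffineSubspace.mk' c (Wᗮ))
        (by rw [AffineSubspace.direction_mk'])
      have hrestsub : (↑rest : Set (EuclideanSpace ℝ (Fin d))) ⊆
          (↑P : Set (EuclideanSpace ℝ (Fin d))) ∩
          (AffineSubspace.mk' c (Wᗮ) : Set (EuclideanSpace ℝ (Fin d))) := by
        intro q hq
        rw [Finset.mem_coe] at hq
        constructor
        · exact Finset.mem_coe.mpr (Finset.filter_subset _ _ hq)
        · have hperp := mem_orthogonal_span z (q - c) (hrestperp q hq)
          apply AffineSubspace.mem_mk'.mpr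
          rwa [vsub_eq_sub]
      have hrestcard : rest.card ≤ k + 1 := by
        have h1 := Set.ncard_le_ncard hrestsub
          (((P : Set (EuclideanSpace ℝ (Fin d))).toFinite).inter_of_left _)
        rw [Set.ncard_coe_finset] at h1
        omega
      have hsplit : (d+1) * (r-1) = m * (r-1) + (d+1-m) * (r-1) := by
        rw [← Nat.add_mul]
        congr 1
        omega
      have hY : 2*(d+1-m) ≤ (d+1-m)*(r-1) ∨ r - 1 ≤ 1 := by
        rcases le_or_gt (r-1) 1 with h | h
        · exact Or.inr h
        · left
          calc 2*(d+1-m) = (d+1-m)*2 := Nat.mul_comm _ _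
            _ ≤ (d+1-m)*(r-1) := Nat.mul_le_mul_left _ (by omega)
      rcases hY with hY | hY
      · have hfacts : (d+1) * (r-1) = m * (r-1) + (d+1-m) * (r-1) ∧
            2*(d+1-m) ≤ (d+1-m)*(r-1) ∧
            (d+1) * (r-1) + 1 ≤ P.card ∧ P.card ≤ m * (r-1) + (k + 1) :=
          ⟨hsplit, hY, hlow, by omega⟩
        obtain ⟨e1, e2, e3, e4⟩ := hfacts
        revert e1 e2 e3 e4
        generalize m * (r-1) = X
        generalize (d+1-m) * (r-1) = Y
        generalize (d+1) * (r-1) = Z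
        intro e1 e2 e3 e4
        omega
      · have hXm : m * (r-1) ≤ m := by
          calc m * (r-1) ≤ m * 1 := Nat.mul_le_mul_left m hY
            _ = m := Nat.mul_one m
        omega
  -- Final assembly
  obtain ⟨c, hcC⟩ := hCne
  have hc : IsCenterpoint P c := hcC
  obtain ⟨hcP, hcard, _⟩ := stepKey c hc
  constructor
  · refine ⟨c, hcP, ?_⟩
    apply Set.eq_singleton_iff_unique_mem.mpr
    refine ⟨hcC, ?_⟩
    intro x hxC
    by_contra hxc
    obtain ⟨hxP, _, ι', hfin', z', hcapz, hcovx⟩ := stepKey x hxC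
    obtain ⟨i, hi⟩ := hcovx c hcP (fun h => hxc h.symm)
    obtain ⟨hzne', hcap'⟩ := hcapz i
    have h1 : ⟪z' i, c⟫ ≤ g (z' i) := (hcenter c).mp hc (z' i) hzne'
    have h2 : r ≤ (P.filter fun q => ⟪z' i, c⟫ ≤ ⟪z' i, q⟫).card :=
      (le_rthSup_iff P r hr hrn (z' i) _).mp h1
    have h3 : (P.filter fun q => ⟪z' i, c⟫ ≤ ⟪z' i, q⟫) ⊆
        (P.filter fun q => 0 < ⟪z' i, q - x⟫) := by
      intro q hq
      rw [Finset.mem_filter] at hq ⊢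
      refine ⟨hq.1, ?_⟩
      have e1 : ⟪z' i, q - x⟫ = ⟪z' i, q⟫ - ⟪z' i, x⟫ := inner_sub_right _ _ _
      have e2 : ⟪z' i, c - x⟫ = ⟪z' i, c⟫ - ⟪z' i, x⟫ := inner_sub_right _ _ _
      have := hq.2
      rw [e1]
      rw [e2] at hi
      linarith
    have h4 := Finset.card_le_card h3
    omega
  · refine ⟨r - 1, ?_, by rw [hcard, Nat.mul_comm]⟩
    by_contra hk
    push_neg at hk
    have h1 : (d+1) * (r-1) ≤ (d+1) * 1 := Nat.mul_le_mul_left (d+1) (by omega)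
    omega
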